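/- arXiv:1601.06261 — 4 statements merged into one kernel-verified Lean document; each statement's English description precedes it below -/
import Mathlib

section
/- Let ρ and ν be Borel measures on ℝ such that ν has finite moments of all orders and ρ(σ) ≤ M·ν(σ) for every Borel set σ and some M ≥ 0. Then ρ has finite moments of all orders, and if the moment sequence of ν is determinate (has a unique representing measure among measures on ℝ with finite moments), then the moment sequence of ρ is also determinate. -/
open MeasureTheory Set
open scoped ENNReal NNReal

noncomputable section

/-- `ν` has finite moments of all orders. -/
def HasMoments (ν : Measure ℝ) : Prop :=
  ∀ n : ℕ, Integrable (fun t => |t| ^ n) ν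

/-- `ν` is a representing measure (on `ℝ`) of the sequence `γ`. -/
def IsRep (γ : ℕ → ℝ) (ν : Measure ℝ) : Prop :=
  HasMoments ν ∧ ∀ n : ℕ, γ n = ∫ t, t ^ n ∂ν

/-- `γ` is a Hamburger moment sequence. -/
def IsHamburger (γ : ℕ → ℝ) : Prop := ∃ ν : Measure ℝ, IsRep γ ν

/-- `γ` has at most one representing measure on `ℝ` (H-determinacy). -/
def HDet (γ : ℕ → ℝ) : Prop :=
  ∀ ν₁ ν₂ : Measure ℝ, IsRep γ ν₁ → IsRep γ ν₂ → ν₁ = ν₂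

/-- `γ` has at least two representing measures on `ℝ` (H-indeterminacy). -/
def HIndet (γ : ℕ → ℝ) : Prop :=
  ∃ ν₁ ν₂ : Measure ℝ, IsRep γ ν₁ ∧ IsRep γ ν₂ ∧ ν₁ ≠ ν₂

/-- `ν` is a representing measure of `γ` supported on `[0,∞)`. -/
def IsSRep (γ : ℕ → ℝ) (ν : Measure ℝ) : Prop :=
  IsRep γ ν ∧ ν (Set.Iio 0) = 0

/-- `γ` is a Stieltjes moment sequence. -/
def IsStieltjes (γ : ℕ → ℝ) : Prop := ∃ ν : Measure ℝ, IsSRep γ ν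

/-- `γ` has at most one representing measure supported on `[0,∞)` (S-determinacy). -/
def SDet (γ : ℕ → ℝ) : Prop :=
  ∀ ν₁ ν₂ : Measure ℝ, IsSRep γ ν₁ → IsSRep γ ν₂ → ν₁ = ν₂

/-- `γ` has at least two representing measures supported on `[0,∞)`. -/
def SIndet (γ : ℕ → ℝ) : Prop :=
  ∃ ν₁ ν₂ : Measure ℝ, IsSRep γ ν₁ ∧ IsSRep γ ν₂ ∧ ν₁ ≠ ν₂

/-- closed support of a Borel measure on `ℝ`. -/
def msupp (ν : Measure ℝ) : Set ℝ := {x | ∀ U ∈ nhds x, 0 < ν U}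

/-- polynomials are dense in `L²(ν)`. -/
def PolyDenseL2 (ν : Measure ℝ) : Prop :=
  ∀ f : ℝ → ℝ, MemLp f 2 ν → ∀ ε : ℝ, 0 < ε →
    ∃ p : Polynomial ℝ, ∫ t, (f t - p.eval t) ^ 2 ∂ν < ε

/-- `ν` is an N-extremal measure of the Hamburger moment sequence `γ`. -/
def NExt (γ : ℕ → ℝ) (ν : Measure ℝ) : Prop :=
  IsRep γ ν ∧ HIndet γ ∧ PolyDenseL2 ν

/-- `β` is the Friedrichs measure of `γ`: the N-extremal measure supported on `[0,∞)`
maximizing the infimum of the support. -/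
def IsFriedrichs (γ : ℕ → ℝ) (β : Measure ℝ) : Prop :=
  NExt γ β ∧ β (Set.Iio 0) = 0 ∧
  ∀ ρ : Measure ℝ, NExt γ ρ → ρ (Set.Iio 0) = 0 → ρ ≠ β →
    sInf (msupp ρ) < sInf (msupp β)

/-- the transformation `T_{ϑ,a}` on real sequences. -/
def Tmap (ϑ a : ℝ) (γ : ℕ → ℝ) : ℕ → ℝ :=
  fun n => ∑ j ∈ Finset.range (n + 1), (n.choose j : ℝ) * a ^ (n - j) * ϑ ^ n * γ j

/-- a measure is H-determinate: it has all moments and is the unique representing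
measure of its own moment sequence. -/
def HDetM (ν : Measure ℝ) : Prop :=
  HasMoments ν ∧ ∀ μ : Measure ℝ, IsRep (fun n => ∫ t, t ^ n ∂ν) μ → μ = ν

/-- the Carleman condition for a sequence (indices from 1), with `1/0 = ∞`. -/
def Carleman (γ : ℕ → ℝ) : Prop :=
  ∑' n : ℕ, (ENNReal.ofReal (γ (n + 1) ^ (1 / (2 * ((n : ℝ) + 1)))))⁻¹ = ⊤

lemma finite_of_moments {ν : Measure ℝ} (h : HasMoments ν) : IsFiniteMeasure ν := by
  have h0 := h 0
  simp only [pow_zero] at h0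
  rcases (integrable_const_iff (c := (1:ℝ))).mp h0 with h1 | h1
  · exact absurd h1 one_ne_zero
  · exact h1

lemma mom_int {ν : Measure ℝ} (h : HasMoments ν) (n : ℕ) :
    Integrable (fun t => t ^ n) ν := by
  refine (h n).mono' ((measurable_id.pow_const n).aestronglyMeasurable) (ae_of_all _ fun t => ?_)
  simp [abs_pow]

theorem stmt_0 (ρ ν : Measure ℝ) (M : ℝ≥0) (hν : HasMoments ν)
    (hle : ∀ σ : Set ℝ, MeasurableSet σ → ρ σ ≤ (M : ℝ≥0∞) * ν σ) :
    HasMoments ρ ∧ (HDetM ν → HDetM ρ) := by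
  have hρν : ρ ≤ (M : ℝ≥0∞) • ν := by
    rw [Measure.le_iff]
    intro s hs
    simpa using hle s hs
  have hρ : HasMoments ρ := fun n =>
    ((hν n).smul_measure ENNReal.coe_ne_top).mono_measure hρν
  refine ⟨hρ, fun hdet => ⟨hρ, fun μ hμ => ?_⟩⟩
  rcases eq_or_ne M 0 with hM | hM
  · -- M = 0: ρ = 0 and μ = 0
    have hρ0 : ρ = 0 := by
      ext s hs
      simpa [hM] using hle s hs
    have hμfin : IsFiniteMeasure μ := finite_of_moments hμ.1
    have h0 := hμ.2 0
    simp only [pow_zero, hρ0] at h0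
    rw [integral_zero_measure, MeasureTheory.integral_const, smul_eq_mul, mul_one] at h0
    have hμ0 : μ Set.univ = 0 := by
      have hlt : μ Set.univ < ⊤ := measure_lt_top μ _
      exact ((ENNReal.toReal_eq_zero_iff _).mp h0.symm).resolve_right hlt.ne
    rw [hρ0]
    exact Measure.measure_univ_eq_zero.mp hμ0
  · have hMinv_ne_top : (M : ℝ≥0∞)⁻¹ ≠ ⊤ := by
      simp [ENNReal.inv_ne_top, hM]
    have hMne : (M : ℝ≥0∞) ≠ 0 := by exact_mod_cast hM
    set c : ℝ≥0∞ := (M : ℝ≥0∞)⁻¹ with hc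
    have hcM : c * (M : ℝ≥0∞) = 1 := ENNReal.inv_mul_cancel hMne ENNReal.coe_ne_top
    set ρ' : Measure ℝ := c • ρ with hρ'
    have hρ'le : ρ' ≤ ν := by
      rw [Measure.le_iff]
      intro s hs
      calc (c • ρ) s = c * ρ s := by simp [ρ']
        _ ≤ c * ((M : ℝ≥0∞) * ν s) := mul_le_mul_right (hle s hs) c
        _ = ν s := by rw [← mul_assoc, hcM, one_mul]
    have hνfin : IsFiniteMeasure ν := finite_of_moments hν
    have hρ'fin : IsFiniteMeasure ρ' := ⟨lt_of_le_of_lt (hρ'le _) (measure_lt_top ν _)⟩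
    have hρ'mom : HasMoments ρ' := fun n => (hρ n).smul_measure hMinv_ne_top
    have hsubmom : HasMoments (ν - ρ') := fun n => (hν n).mono_measure (MeasureTheory.Measure.sub_le)
    have hcancel : ν - ρ' + ρ' = ν := Measure.sub_add_cancel_of_le hρ'le
    have hμmom := hμ.1
    set ν' : Measure ℝ := (ν - ρ') + c • μ with hν'
    have hν'mom : HasMoments ν' := fun n =>
      (hsubmom n).add_measure ((hμmom n).smul_measure hMinv_ne_top)
    have hmoments : ∀ n : ℕ, ∫ t, t ^ n ∂ν = ∫ t, t ^ n ∂ν' := by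
      intro n
      have h1 : ∫ t, t ^ n ∂ν = ∫ t, t ^ n ∂(ν - ρ') + ∫ t, t ^ n ∂ρ' := by
        conv_lhs => rw [← hcancel]
        exact integral_add_measure (mom_int hsubmom n) (mom_int hρ'mom n)
      have h2 : ∫ t, t ^ n ∂ν' = ∫ t, t ^ n ∂(ν - ρ') + ∫ t, t ^ n ∂(c • μ) :=
        integral_add_measure (mom_int hsubmom n) (mom_int (fun m => (hμmom m).smul_measure hMinv_ne_top) n)
      have h3 : ∫ t, t ^ n ∂(c • μ) = ∫ t, t ^ n ∂ρ' := by
        rw [hρ', integral_smul_measure, integral_smul_measure, ← hμ.2 n]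
      rw [h1, h2, h3]
    have hrep : IsRep (fun n => ∫ t, t ^ n ∂ν) ν' := ⟨hν'mom, hmoments⟩
    have hν'eq : ν' = ν := hdet.2 ν' hrep
    -- cancel
    ext s hs
    have key : (ν - ρ') s + c * μ s = (ν - ρ') s + c * ρ s := by
      have e1 : (ν - ρ') s + (c • μ) s = ((ν - ρ') + c • μ) s := (Measure.add_apply _ _ _).symm
      have e2 : ((ν - ρ') + ρ') s = (ν - ρ') s + ρ' s := Measure.add_apply _ _ _
      have : ((ν - ρ') + c • μ) s = ((ν - ρ') + ρ') s := by rw [← hν', hν'eq, hcancel]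
      simpa [ρ', Measure.smul_apply, smul_eq_mul] using e1.trans (this.trans e2)
    have hfin : (ν - ρ') s ≠ ⊤ := (lt_of_le_of_lt (Measure.le_iff'.mp MeasureTheory.Measure.sub_le s) (measure_lt_top ν s)).ne
    have : c * μ s = c * ρ s := by
      exact (ENNReal.add_right_inj hfin).mp key
    have hcne : c ≠ 0 := by simp [hc, ENNReal.inv_ne_zero]
    exact (ENNReal.mul_right_inj hcne hMinv_ne_top).mp this
end
end

section
/- If (γ₁ₙ) and (γ₂ₙ) are Hamburger moment sequences such that the sum sequence (γ₁ₙ + γ₂ₙ) is H-determinate, then both (γ₁ₙ) and (γ₂ₙ) are H-determinate. -/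
open MeasureTheory Set
open scoped ENNReal NNReal

noncomputable section

lemma integrable_pow_of_moments {ν : Measure ℝ} (h : HasMoments ν) (n : ℕ) :
    Integrable (fun t : ℝ => t ^ n) ν := by
  have := (h n)
  refine this.mono' (Measurable.aestronglyMeasurable (by measurability)) ?_
  filter_upwards with t
  simp [abs_pow, abs_abs, le_refl]

lemma isRep_add {γ₁ γ₂ : ℕ → ℝ} {ν₁ ν₂ : Measure ℝ} (h1 : IsRep γ₁ ν₁) (h2 : IsRep γ₂ ν₂) :
    IsRep (fun n => γ₁ n + γ₂ n) (ν₁ + ν₂) := by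
  refine ⟨fun n => ((h1.1 n).add_measure (h2.1 n)), fun n => ?_⟩
  simp only []
  rw [integral_add_measure (integrable_pow_of_moments h1.1 n) (integrable_pow_of_moments h2.1 n),
    h1.2 n, h2.2 n]

lemma cancel {ν₁ ν₁' ν₂ : Measure ℝ} (hfin : IsFiniteMeasure ν₂)
    (h : ν₁ + ν₂ = ν₁' + ν₂) : ν₁ = ν₁' := by
  ext s hs
  have := congrArg (fun μ : Measure ℝ => μ s) h
  simp only [Measure.add_apply] at this
  exact WithTop.add_right_cancel (measure_ne_top ν₂ s) this

theorem stmt_1 (γ₁ γ₂ : ℕ → ℝ) (h₁ : IsHamburger γ₁) (h₂ : IsHamburger γ₂)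
    (hdet : HDet (fun n => γ₁ n + γ₂ n)) : HDet γ₁ ∧ HDet γ₂ := by
  obtain ⟨ν₁, hν₁⟩ := h₁
  obtain ⟨ν₂, hν₂⟩ := h₂
  have fin : ∀ ν : Measure ℝ, HasMoments ν → IsFiniteMeasure ν := by
    intro ν hm
    have := hm 0
    simp only [pow_zero] at this
    rw [integrable_const_iff] at this
    rcases this with h | h
    · exact absurd h one_ne_zero
    · exact h
  constructor
  · intro μ μ' hμ hμ'
    have e := hdet _ _ (isRep_add hμ hν₂) (isRep_add hμ' hν₂)
    exact cancel (fin _ hν₂.1) e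
  · intro μ μ' hμ hμ'
    have e := hdet _ _ (isRep_add hν₁ hμ) (isRep_add hν₁ hμ')
    have e' : μ + ν₁ = μ' + ν₁ := by rw [add_comm μ ν₁, add_comm μ' ν₁]; exact e
    exact cancel (fin _ hν₁.1) e'
end
end

section
/- For every a > 1 there exists q₀ ∈ (0, 1/a) such that for all q ∈ (0, q₀): ∏_{j=1}^∞ (1 − (q/a) q^{j-1}) + ∏_{j=1}^∞ (1 − a q·q^{j-1}) > 1. -/
open MeasureTheory Set
open scoped ENNReal NNReal

noncomputable section

lemma weier_finset (x : ℕ → ℝ) (hx0 : ∀ j, 0 ≤ x j) (hx1 : ∀ j, x j ≤ 1) (s : Finset ℕ) :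
    1 - ∑ j ∈ s, x j ≤ ∏ j ∈ s, (1 - x j) := by
  classical
  induction s using Finset.induction with
  | empty => simp
  | @insert _ _ hns ih =>
    rename_i i s
    rw [Finset.sum_insert hns, Finset.prod_insert hns]
    have hS : 0 ≤ ∑ j ∈ s, x j := Finset.sum_nonneg fun j _ => hx0 j
    nlinarith [hx0 i, hx1 i, ih]

lemma prod_lb (c q : ℝ) (hc0 : 0 ≤ c) (hc1 : c < 1) (hq0 : 0 < q) (hq1 : q < 1) :
    1 - c / (1 - q) ≤ ∏' j : ℕ, (1 - c * q ^ j) := by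
  have hqj : ∀ j : ℕ, 0 ≤ c * q ^ j := fun j => mul_nonneg hc0 (pow_nonneg hq0.le j)
  have hqj1 : ∀ j : ℕ, c * q ^ j < 1 := fun j =>
    lt_of_le_of_lt (by nlinarith [pow_le_one₀ hq0.le hq1.le (n := j), pow_nonneg hq0.le j]) hc1
  have hpos : ∀ j : ℕ, 0 < 1 - c * q ^ j := fun j => by linarith [hqj1 j]
  -- summability of geometric
  have hgeo : Summable (fun j : ℕ => q ^ j) := summable_geometric_of_lt_one hq0.le hq1
  -- summability of -log
  have hlog : Summable (fun j : ℕ => Real.log (1 - c * q ^ j)) := by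
    rw [← summable_neg_iff]
    apply Summable.of_nonneg_of_le (fun j => ?_) (fun j => ?_) (hgeo.mul_left (c / (1 - c)))
    · rw [neg_nonneg]
      exact Real.log_nonpos (by linarith [hpos j]) (by linarith [hqj j])
    · have h1 : -Real.log (1 - c * q ^ j) = Real.log (1 - c * q ^ j)⁻¹ := (Real.log_inv _).symm
      rw [h1]
      have h2 := Real.log_le_sub_one_of_pos (inv_pos.mpr (hpos j))
      refine h2.trans ?_
      have hqle : q ^ j ≤ 1 := pow_le_one₀ hq0.le hq1.le
      have hx : c * q ^ j ≤ c := by nlinarith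
      have hyle : (1 - c * q ^ j)⁻¹ ≤ (1 - c)⁻¹ := by
        apply inv_anti₀ (by linarith) (by linarith)
      have heq : (1 - c * q ^ j)⁻¹ - 1 = (c * q ^ j) * (1 - c * q ^ j)⁻¹ := by
        rw [inv_eq_one_div, div_sub' (hpos j).ne']
        ring_nf
      rw [heq, div_eq_mul_inv]
      nlinarith [mul_le_mul_of_nonneg_left hyle (hqj j)]
  have hmult : Multipliable (fun j : ℕ => 1 - c * q ^ j) := by
    have := Real.multipliable_of_summable_log hpos hlog
    exact this
  have hhp := hmult.hasProd
  refine ge_of_tendsto hhp (Filter.Eventually.of_forall fun s => ?_)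
  refine le_trans ?_ (weier_finset (fun j => c * q ^ j) hqj (fun j => (hqj1 j).le) s)
  have hsum : ∑ j ∈ s, c * q ^ j ≤ c / (1 - q) := by
    have := Summable.sum_le_tsum s (fun j _ => hqj j) (hgeo.mul_left c)
    rwa [tsum_mul_left, tsum_geometric_of_lt_one hq0.le hq1, ← div_eq_mul_inv] at this
  linarith

theorem stmt_14 (a : ℝ) (ha : 1 < a) :
    ∃ q₀ : ℝ, 0 < q₀ ∧ q₀ < 1 / a ∧ ∀ q : ℝ, 0 < q → q < q₀ →
      1 < (∏' j : ℕ, (1 - (q / a) * q ^ j)) + (∏' j : ℕ, (1 - (a * q) * q ^ j)) := by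
  have ha0 : (0:ℝ) < a := by linarith
  refine ⟨1 / (2 * (a + 1)), by positivity, ?_, ?_⟩
  · rw [div_lt_div_iff₀ (by linarith) ha0]
    nlinarith
  · intro q hq0 hqlt
    have hq1 : q < 1 := by
      have : 1 / (2 * (a + 1)) < 1 := by
        rw [div_lt_one (by linarith)]; linarith
      linarith
    have hqsmall : q * (2 * (a + 1)) < 1 := by
      rw [← lt_div_iff₀ (by linarith)]; exact hqlt
    have hc1 : q / a < 1 := by
      rw [div_lt_one ha0]; nlinarith
    have hc2 : a * q < 1 := by nlinarith
    have h1 := prod_lb (q / a) q (by positivity) hc1 hq0 hq1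
    have h2 := prod_lb (a * q) q (by positivity) hc2 hq0 hq1
    have hkey : (q / a) / (1 - q) + (a * q) / (1 - q) < 1 := by
      rw [← add_div, div_lt_one (by linarith)]
      have hqa : q / a * a = q := div_mul_cancel₀ q ha0.ne'
      nlinarith [div_nonneg hq0.le ha0.le]
    linarith
end
end

section
/- Let β be a Borel measure on ℝ with finite moments of all orders such that β(ℝ₊) > 1, 0 < inf supp β, and supp β = {θ₁, θ₂, …} with (θᵢ) injective. For a > 0 let θᵢ^{(a)} = (θᵢ + a)/a and β^{(a)} the pushforward of β under t ↦ (t+a)/a. If m is such that β({θ₁,…,θ_m}) > 1, then there exists a₁ > 0 such that for all a ∈ (0, a₁): Σ_{i=1}^m ((θᵢ^{(a)} − 1)/θᵢ^{(a)}) β^{(a)}({θᵢ^{(a)}}) > (∫(t−1) dβ^{(a)}(t)) / (1 + ∫(t−1) dβ^{(a)}(t)). -/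
open MeasureTheory Set
open scoped ENNReal NNReal

noncomputable section

theorem stmt_16 (β : Measure ℝ) (θ : ℕ → ℝ) (hmom : HasMoments β)
    (hmass : 1 < β (Set.Ici 0))
    (hsupp : msupp β = Set.range θ) (hinj : Function.Injective θ)
    (hbdd : BddBelow (msupp β)) (hpos : 0 < sInf (msupp β))
    (m : ℕ) (hm : 1 < β (θ '' Set.Iio m)) :
    ∃ a₁ : ℝ, 0 < a₁ ∧ ∀ a : ℝ, 0 < a → a < a₁ →
      (∫ t, (t - 1) ∂(β.map (fun t => (t + a) / a))) /
          (1 + ∫ t, (t - 1) ∂(β.map (fun t => (t + a) / a))) <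
        ∑ i ∈ Finset.range m, (((θ i + a) / a - 1) / ((θ i + a) / a)) *
          ((β.map (fun t => (t + a) / a)) {(θ i + a) / a}).toReal := by

  classical
  -- β is a finite measure
  have hβfin : IsFiniteMeasure β := by
    have h0 := hmom 0
    simp only [pow_zero] at h0
    rcases integrable_const_iff.mp h0 with h | h
    · exact absurd h one_ne_zero
    · exact h
  -- all θ i are positive
  have hθmem : ∀ i, θ i ∈ msupp β := fun i => by rw [hsupp]; exact Set.mem_range_self i
  have hθpos : ∀ i, 0 < θ i := fun i => hpos.trans_le (csInf_le hbdd (hθmem i))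
  -- β vanishes on negatives
  have hnull : β (Set.Iio 0) = 0 := by
    apply measure_null_of_locally_null
    intro x hx
    have hx' : x ∉ msupp β := by
      rw [hsupp]; rintro ⟨i, rfl⟩
      exact absurd hx (not_lt.mpr (hθpos i).le)
    simp only [msupp, Set.mem_setOf_eq, not_forall] at hx'
    obtain ⟨U, hU, hU0⟩ := hx'
    exact ⟨U, nhdsWithin_le_nhds hU, le_zero_iff.mp (not_lt.mp hU0)⟩
  -- integrability of identity
  have habs : Integrable (fun t : ℝ => |t|) β := by simpa using hmom 1
  have hint : Integrable (fun t : ℝ => t) β :=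
    habs.mono' measurable_id.aestronglyMeasurable
      (Filter.Eventually.of_forall fun t => le_of_eq (Real.norm_eq_abs t))
  have hIa : 0 ≤ ∫ t, t ∂β := by
    apply integral_nonneg_of_ae
    rw [Filter.EventuallyLE, ae_iff]
    have : {t : ℝ | ¬ (0:ℝ) ≤ t} = Set.Iio 0 := by ext t; simp [not_le]
    simpa [this, Set.Iio] using hnull
  -- the total mass of the finite support piece
  have himg : θ '' Set.Iio m = ⋃ i ∈ Finset.range m, {θ i} := by
    ext x
    simp only [Set.mem_image, Set.mem_Iio, Set.mem_iUnion, Finset.mem_range,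
      Set.mem_singleton_iff]
    constructor
    · rintro ⟨i, hi, rfl⟩; exact ⟨i, hi, rfl⟩
    · rintro ⟨i, hi, rfl⟩; exact ⟨i, hi, rfl⟩
  have hmeasum : β (θ '' Set.Iio m) = ∑ i ∈ Finset.range m, β {θ i} := by
    rw [himg, measure_biUnion_finset ?_ (fun i _ => measurableSet_singleton _)]
    intro i _ j _ hij
    exact Set.disjoint_singleton.mpr (hinj.ne hij)
  have hW : 1 < ∑ i ∈ Finset.range m, (β {θ i}).toReal := by
    have hne : β (θ '' Set.Iio m) ≠ ⊤ := measure_ne_top β _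
    have h1 : (1 : ℝ) < (β (θ '' Set.Iio m)).toReal := by
      rw [← ENNReal.toReal_one]
      exact (ENNReal.toReal_lt_toReal (by simp) hne).mpr hm
    rwa [hmeasum, ENNReal.toReal_sum (fun i _ => measure_ne_top β _)] at h1
  set W := ∑ i ∈ Finset.range m, (β {θ i}).toReal with hWdef
  set K := ∑ i ∈ Finset.range m, (β {θ i}).toReal / θ i with hKdef
  have hK : 0 < K := by
    rcases (lt_or_ge 0 K) with h | h
    · exact h
    · exfalso
      have hzero : ∀ i ∈ Finset.range m, (β {θ i}).toReal / θ i = 0 := by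
        have := (Finset.sum_eq_zero_iff_of_nonneg
          (fun i _ => div_nonneg ENNReal.toReal_nonneg (hθpos i).le)).mp
          (le_antisymm h (Finset.sum_nonneg fun i _ =>
            div_nonneg ENNReal.toReal_nonneg (hθpos i).le))
        exact this
      have hz : ∀ i ∈ Finset.range m, (β {θ i}).toReal = 0 := by
        intro i hi
        rcases div_eq_zero_iff.mp (hzero i hi) with h' | h'
        · exact h'
        · exact absurd h' (hθpos i).ne'
      rw [hWdef, Finset.sum_eq_zero hz] at hW
      linarith
  refine ⟨(W - 1) / K, div_pos (by linarith) hK, ?_⟩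
  intro a ha haa₁
  have hane : a ≠ 0 := ha.ne'
  have hψm : Measurable (fun t : ℝ => (t + a) / a) := (measurable_id.add_const a).div_const a
  -- the integral of (t - 1) against the pushforward
  have hI : ∫ t, (t - 1) ∂(β.map (fun t => (t + a) / a)) = (∫ t, t ∂β) / a := by
    rw [integral_map hψm.aemeasurable
      (by fun_prop : AEStronglyMeasurable (fun t : ℝ => t - 1) (β.map (fun t => (t + a) / a)))]
    have heq : ∀ t : ℝ, (t + a) / a - 1 = t / a := fun t => by field_simp; ring
    simp_rw [heq]
    exact integral_div a (fun t => t)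
  -- singleton masses
  have hsing : ∀ i : ℕ, (β.map (fun t => (t + a) / a)) {(θ i + a) / a} = β {θ i} := by
    intro i
    rw [Measure.map_apply hψm (measurableSet_singleton _)]
    congr 1
    ext t
    simp only [Set.mem_preimage, Set.mem_singleton_iff]
    constructor
    · intro h
      rw [div_eq_div_iff hane hane] at h
      have := mul_right_cancel₀ hane h
      linarith
    · rintro rfl; rfl
  -- coefficients
  have hcoef : ∀ i : ℕ, ((θ i + a) / a - 1) / ((θ i + a) / a) = θ i / (θ i + a) := by
    intro i
    have hθ := hθpos i
    have hθa : θ i + a ≠ 0 := by linarith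
    field_simp
    ring
  have hsum : ∑ i ∈ Finset.range m, (((θ i + a) / a - 1) / ((θ i + a) / a)) *
      ((β.map (fun t => (t + a) / a)) {(θ i + a) / a}).toReal
      = ∑ i ∈ Finset.range m, (θ i / (θ i + a)) * (β {θ i}).toReal :=
    Finset.sum_congr rfl fun i _ => by rw [hcoef i, hsing i]
  rw [hI, hsum]
  set S := (∫ t, t ∂β) / a with hSdef
  have hS0 : 0 ≤ S := div_nonneg hIa ha.le
  have h1 : S / (1 + S) < 1 := by
    rw [div_lt_one (by linarith)]; linarith
  have hstep : ∑ i ∈ Finset.range m, (1 - a / θ i) * (β {θ i}).toReal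
      ≤ ∑ i ∈ Finset.range m, (θ i / (θ i + a)) * (β {θ i}).toReal := by
    refine Finset.sum_le_sum fun i _ => ?_
    have hθ := hθpos i
    have hle : 1 - a / θ i ≤ θ i / (θ i + a) := by
      have h' : (θ i - a) / θ i ≤ θ i / (θ i + a) := by
        rw [div_le_div_iff₀ hθ (by linarith)]
        nlinarith [sq_nonneg a]
      rwa [sub_div, div_self hθ.ne'] at h'
    exact mul_le_mul_of_nonneg_right hle ENNReal.toReal_nonneg
  have hexp : ∑ i ∈ Finset.range m, (1 - a / θ i) * (β {θ i}).toReal = W - a * K := by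
    rw [hWdef, hKdef, Finset.mul_sum, ← Finset.sum_sub_distrib]
    exact Finset.sum_congr rfl fun i _ => by ring
  have haK : a * K < W - 1 := by
    have := (lt_div_iff₀ hK).mp haa₁
    linarith
  have h2 : (1:ℝ) < ∑ i ∈ Finset.range m, (θ i / (θ i + a)) * (β {θ i}).toReal := by
    linarith [hstep, hexp, haK]
  exact h1.trans h2
end
end
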